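/- Let T be a finite type, R : T → ℝ, and let the trajectory probability factor as p θ τ = q θ τ · c τ, where c : T → ℝ satisfies c τ > 0 and does not depend on θ (the environment factor), and q : ℝ → T → ℝ satisfies q θ τ > 0 with θ' ↦ q θ' τ having derivative q' τ at a fixed θ (the policy factor). Then: (a) the log-derivative of the full likelihood equals the log-derivative of the policy factor alone, i.e. θ' ↦ log (p θ' τ) has derivative q' τ / q θ τ at θ; and (b) the masked policy-gradient estimator is exact: J(θ') = ∑ τ, p θ' τ · R τ has derivative ∑ τ, p θ τ · (q' τ / q θ τ) · R τ at θ. -/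

import Mathlib

/-- Correctness of the token-level masked policy-gradient estimator: if the trajectory
likelihood factors as `p θ τ = q θ τ · c τ` with a positive environment factor `c τ`
independent of `θ` and a positive differentiable policy factor `q`, then
(a) the log-derivative of the full likelihood equals that of the policy factor alone,
and (b) the expected reward `J(θ') = ∑ τ, p θ' τ * R τ` has derivative
`∑ τ, p θ τ * (q' τ / q θ τ) * R τ` at `θ` (the masked estimator is exact). -/
theorem masked_policy_gradient_exact
    {T : Type*} [Fintype T]
    (p q : ℝ → T → ℝ) (c : T → ℝ) (R : T → ℝ) (θ : ℝ) (q' : T → ℝ)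
    (hfac : ∀ θ' τ, p θ' τ = q θ' τ * c τ)
    (hc : ∀ τ, 0 < c τ)
    (hq : ∀ τ, 0 < q θ τ)
    (hderiv : ∀ τ, HasDerivAt (fun θ' => q θ' τ) (q' τ) θ) :
    (∀ τ, HasDerivAt (fun θ' => Real.log (p θ' τ)) (q' τ / q θ τ) θ) ∧
    HasDerivAt (fun θ' => ∑ τ, p θ' τ * R τ)
      (∑ τ, p θ τ * (q' τ / q θ τ) * R τ) θ := by
  constructor
  · intro τ
    have h : HasDerivAt (fun θ' => Real.log (p θ' τ))
        ((q' τ * c τ) / (p θ τ)) θ := by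
      have hp : HasDerivAt (fun θ' => p θ' τ) (q' τ * c τ) θ := by
        simpa only [hfac] using (hderiv τ).mul_const (c τ)
      exact hp.log (by rw [hfac]; exact (mul_pos (hq τ) (hc τ)).ne')
    have : (q' τ * c τ) / (p θ τ) = q' τ / q θ τ := by
      rw [hfac]
      exact mul_div_mul_right _ _ (hc τ).ne'
    rwa [this] at h
  · have h : HasDerivAt (fun θ' => ∑ τ, p θ' τ * R τ)
        (∑ τ, q' τ * c τ * R τ) θ := by
      apply HasDerivAt.fun_sum
      intro τ _
      have hp : HasDerivAt (fun θ' => p θ' τ) (q' τ * c τ) θ := by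
        simpa only [hfac] using (hderiv τ).mul_const (c τ)
      exact hp.mul_const (R τ)
    have : (∑ τ, q' τ * c τ * R τ) = ∑ τ, p θ τ * (q' τ / q θ τ) * R τ := by
      apply Finset.sum_congr rfl
      intro τ _
      rw [hfac]
      field_simp [(hq τ).ne']
    rwa [this] at h
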